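/- Let X : 𝒳 → 𝒴 be a linear map between finite-dimensional complex Hilbert spaces, and let Π₁ on 𝒴 and Π₂ on 𝒳 be orthogonal projections. If ‖Π₁XΠ₂‖₁ = ‖X‖₁ then Π₁XΠ₂ = X. -/

import Mathlib

open Matrix Kronecker BigOperators ComplexOrder

noncomputable section

/-- The positive semidefinite square root (removed from Mathlib; old definition restored). -/
noncomputable def Matrix.PosSemidef.sqrt {n 𝕜 : Type*} [Fintype n] [DecidableEq n] [RCLike 𝕜]
    {A : Matrix n n 𝕜} (hA : A.PosSemidef) : Matrix n n 𝕜 :=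
  (hA.1.eigenvectorUnitary : Matrix n n 𝕜) *
    diagonal (fun i => ((Real.sqrt (hA.1.eigenvalues i) : ℝ) : 𝕜)) *
    (star hA.1.eigenvectorUnitary : Matrix n n 𝕜)

/-- Trace norm (sum of singular values) of a complex matrix. -/
noncomputable def traceNorm {l m : Type*} [Fintype l] [Fintype m] [DecidableEq m]
    (A : Matrix l m ℂ) : ℝ :=
  ((Matrix.posSemidef_conjTranspose_mul_self A).sqrt.trace).re

/-- Frobenius norm. -/
noncomputable def frobNorm {l m : Type*} [Fintype l] [Fintype m]
    (A : Matrix l m ℂ) : ℝ :=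
  Real.sqrt ((Aᴴ * A).trace.re)

/-- Partial transpose on the first tensor factor. -/
def ptranspose {a b : Type*} (X : Matrix (a × b) (a × b) ℂ) : Matrix (a × b) (a × b) ℂ :=
  Matrix.of fun p q => X (q.1, p.2) (p.1, q.2)

/-- Outer product `u v*`. -/
def outer {a : Type*} (u v : a → ℂ) : Matrix a a ℂ :=
  Matrix.of fun p q => u p * star (v q)

/-- Density operator: positive semidefinite with trace one. -/
def IsDensity {a : Type*} [Fintype a] (ρ : Matrix a a ℂ) : Prop :=
  ρ.PosSemidef ∧ ρ.trace = 1

/-- Maximally entangled unit vector in `ℂⁿ ⊗ ℂᵐ`. -/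
def MaxEntangled (n m : ℕ) (u : Fin n × Fin m → ℂ) : Prop :=
  ∃ (x : Fin (min n m) → EuclideanSpace ℂ (Fin n))
    (y : Fin (min n m) → EuclideanSpace ℂ (Fin m)),
    Orthonormal ℂ x ∧ Orthonormal ℂ y ∧
      ∀ p : Fin n × Fin m,
        u p = (1 / Real.sqrt (min n m) : ℝ) * ∑ i, x i p.1 * y i p.2

/-- Extension `Φ ⊗ I` of a matrix map to a system with ancilla `c`. -/
def tensorExt {a b c : Type*} [Fintype a] [DecidableEq a] [Fintype c]
    (Φ : Matrix a a ℂ →ₗ[ℂ] Matrix b b ℂ)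
    (X : Matrix (a × c) (a × c) ℂ) : Matrix (b × c) (b × c) ℂ :=
  Matrix.of fun p q => Φ (Matrix.of fun i j => X (i, p.2) (j, q.2)) p.1 q.1

/-- Quantum channel: completely positive and trace preserving. -/
def IsChannel {a b : Type*} [Fintype a] [DecidableEq a] [Fintype b]
    (Φ : Matrix a a ℂ →ₗ[ℂ] Matrix b b ℂ) : Prop :=
  (∀ X, (Φ X).trace = X.trace) ∧
    ∀ (k : ℕ) (X : Matrix (a × Fin k) (a × Fin k) ℂ),
      X.PosSemidef → (tensorExt Φ X).PosSemidef

/-- Partial trace over the second tensor factor. -/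
def ptraceRight {a b : Type*} [Fintype b] (M : Matrix (a × b) (a × b) ℂ) :
    Matrix a a ℂ :=
  Matrix.of fun i k => ∑ c, M (i, c) (k, c)

/-- Partial trace over the first tensor factor. -/
def ptraceLeft {a b : Type*} [Fintype a] (M : Matrix (a × b) (a × b) ℂ) :
    Matrix b b ℂ :=
  Matrix.of fun i k => ∑ c, M (c, i) (c, k)

/-- Canonical maximally entangled state `τ = (1/d) vec(I)vec(I)*` on `a ⊗ a`. -/
noncomputable def tauGen {a : Type*} [Fintype a] [DecidableEq a] :
    Matrix (a × a) (a × a) ℂ :=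
  Matrix.of fun p q =>
    (Fintype.card a : ℂ)⁻¹ * (if p.1 = p.2 then 1 else 0) * (if q.1 = q.2 then 1 else 0)

/-- The operator `τ ⊗ σ` on `a ⊗ (a ⊗ r)`. -/
noncomputable def tauSigma {a r : Type*} [Fintype a] [DecidableEq a]
    (σ : Matrix r r ℂ) : Matrix (a × (a × r)) (a × (a × r)) ℂ :=
  Matrix.of fun p q => tauGen (p.1, p.2.1) (q.1, q.2.1) * σ p.2.2 q.2.2

/-- Fidelity of two positive semidefinite matrices. -/
noncomputable def fidelity {a : Type*} [Fintype a] [DecidableEq a]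
    {P Q : Matrix a a ℂ} (hP : P.PosSemidef) (hQ : Q.PosSemidef) : ℝ :=
  traceNorm (hP.sqrt * hQ.sqrt)

open scoped MatrixOrder in
lemma Matrix.PosSemidef.sqrt_eq_cfcSqrt {n 𝕜 : Type*} [Fintype n] [DecidableEq n] [RCLike 𝕜]
    {A : Matrix n n 𝕜} (hA : A.PosSemidef) : hA.sqrt = CFC.sqrt A := by
  rw [CFC.sqrt_eq_cfc, cfc_nnreal_eq_real _ A, hA.1.cfc_eq]
  simp only [IsHermitian.cfc, Unitary.conjStarAlgAut_apply, Matrix.PosSemidef.sqrt]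
  congr 3
  funext i
  simp [Real.coe_sqrt, Real.coe_toNNReal', max_eq_left (hA.eigenvalues_nonneg i)]

open scoped MatrixOrder in
lemma Matrix.PosSemidef.posSemidef_sqrt {n 𝕜 : Type*} [Fintype n] [DecidableEq n] [RCLike 𝕜]
    {A : Matrix n n 𝕜} (hA : A.PosSemidef) : hA.sqrt.PosSemidef := by
  rw [hA.sqrt_eq_cfcSqrt]
  exact (CFC.sqrt_nonneg A).posSemidef

open scoped MatrixOrder in
lemma Matrix.PosSemidef.sqrt_mul_self {n 𝕜 : Type*} [Fintype n] [DecidableEq n] [RCLike 𝕜]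
    {A : Matrix n n 𝕜} (hA : A.PosSemidef) : hA.sqrt * hA.sqrt = A := by
  rw [hA.sqrt_eq_cfcSqrt]
  exact CFC.sqrt_mul_sqrt_self A hA.nonneg

open scoped MatrixOrder in
lemma Matrix.PosSemidef.eq_sqrt_of_sq_eq {n 𝕜 : Type*} [Fintype n] [DecidableEq n] [RCLike 𝕜]
    {A B : Matrix n n 𝕜} (hA : A.PosSemidef) (hB : B.PosSemidef) (hAB : A ^ 2 = B) :
    A = hB.sqrt := by
  rw [hB.sqrt_eq_cfcSqrt, eq_comm, CFC.sqrt_eq_iff B A hB.nonneg hA.nonneg, ← pow_two, hAB]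

namespace Stmt8Aux

open Complex


variable {k l : Type*} [Fintype k] [DecidableEq k] [Fintype l] [DecidableEq l]

lemma sqrt_congr {A B : Matrix k k ℂ} (h : A = B) (hA : A.PosSemidef) (hB : B.PosSemidef) :
    hA.sqrt = hB.sqrt := by subst h; rfl

lemma herm_swap (M : Matrix k k ℂ) (hM : Mᴴ = M) (v w : k → ℂ) :
    star v ⬝ᵥ (M *ᵥ w) = star (M *ᵥ v) ⬝ᵥ w := by
  rw [star_mulVec, hM, dotProduct_mulVec]

lemma retr_psd_nonneg {D : Matrix k k ℂ} (hD : D.PosSemidef) :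
    0 ≤ D.trace.re ∧ (D.trace.re = 0 → D = 0) := by
  set R := hD.sqrt with hRdef
  have hR : Rᴴ = R := hD.posSemidef_sqrt.1
  have hD2 : D = Rᴴ * R := by rw [hR]; exact hD.sqrt_mul_self.symm
  have htr : D.trace.re = ∑ j, ∑ i, Complex.normSq (R i j) := by
    rw [hD2, Matrix.trace]
    simp only [Matrix.diag_apply, Matrix.mul_apply, Matrix.conjTranspose_apply]
    rw [Complex.re_sum]
    refine Finset.sum_congr rfl fun j _ => ?_
    rw [Complex.re_sum]
    refine Finset.sum_congr rfl fun i _ => ?_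
    rw [Complex.star_def, mul_comm, Complex.mul_conj, Complex.ofReal_re]
  constructor
  · rw [htr]
    exact Finset.sum_nonneg fun j _ => Finset.sum_nonneg fun i _ => Complex.normSq_nonneg _
  · intro h0
    rw [htr] at h0
    have hzero : ∀ j ∈ Finset.univ, ∀ i ∈ (Finset.univ : Finset k),
        Complex.normSq (R i j) = 0 := by
      intro j hj
      have := (Finset.sum_eq_zero_iff_of_nonneg (fun j _ =>
        Finset.sum_nonneg fun i _ => Complex.normSq_nonneg (R i j))).mp h0 j hj
      exact fun i hi => (Finset.sum_eq_zero_iff_of_nonneg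
        (fun i _ => Complex.normSq_nonneg (R i j))).mp this i hi
    have hR0 : R = 0 := by
      ext i j
      exact Complex.normSq_eq_zero.mp (hzero j (Finset.mem_univ _) i (Finset.mem_univ _))
    rw [hD2, hR, hR0, Matrix.mul_zero]

lemma retr_sqrt {A : Matrix k k ℂ} (hA : A.PosSemidef) :
    hA.sqrt.trace.re = ∑ i, Real.sqrt (hA.1.eigenvalues i) := by
  have h1 : hA.sqrt.trace
      = (Matrix.diagonal (RCLike.ofReal ∘ Real.sqrt ∘ hA.1.eigenvalues : k → ℂ)).trace := by
    show (hA.1.eigenvectorUnitary.1 * Matrix.diagonal (RCLike.ofReal ∘ Real.sqrt ∘ hA.1.eigenvalues : k → ℂ)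
      * (star hA.1.eigenvectorUnitary : Matrix k k ℂ)).trace = _
    rw [Matrix.trace_mul_cycle]
    rw [show (star hA.1.eigenvectorUnitary : Matrix k k ℂ) * hA.1.eigenvectorUnitary.1 = 1 from
      Matrix.mem_unitaryGroup_iff'.mp hA.1.eigenvectorUnitary.2, Matrix.one_mul]
  rw [h1, Matrix.trace_diagonal, Complex.re_sum]
  simp [Function.comp]

lemma sqrt_trace_mono {A B : Matrix k k ℂ} (hA : A.PosSemidef) (hB : B.PosSemidef)
    (hAB : (A + B).PosSemidef) :
    hA.sqrt.trace.re ≤ hAB.sqrt.trace.re ∧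
      (hAB.sqrt.trace.re = hA.sqrt.trace.re → B = 0) := by
  set S := hA.sqrt with hSdef
  set T := hAB.sqrt with hTdef
  have hS := hA.posSemidef_sqrt
  have hT := hAB.posSemidef_sqrt
  have hSh : Sᴴ = S := hS.1
  have hTh : Tᴴ = T := hT.1
  have hS2 : S * S = A := hA.sqrt_mul_self
  have hT2 : T * T = A + B := hAB.sqrt_mul_self
  have hDh : (T - S).IsHermitian := hT.1.sub hS.1
  have hDpsd : (T - S).PosSemidef := by
    apply hDh.posSemidef_iff_eigenvalues_nonneg.mpr
    intro i
    by_contra hneg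
    rw [not_le, Pi.zero_apply] at hneg
    set α : ℝ := hDh.eigenvalues i with hα
    set v : k → ℂ := ⇑(hDh.eigenvectorBasis i) with hv
    have hvv : star v ⬝ᵥ v = 1 := by
      have h1 := hDh.eigenvectorBasis.orthonormal.1 i
      have h2 : (inner ℂ (hDh.eigenvectorBasis i) (hDh.eigenvectorBasis i) : ℂ) = 1 := by
        rw [inner_self_eq_norm_sq_to_K, h1]
        norm_num
      rw [EuclideanSpace.inner_eq_star_dotProduct] at h2
      rwa [dotProduct_comm] at h2
    have hev : (T - S) *ᵥ v = α • v := hDh.mulVec_eigenvectorBasis i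
    set u : k → ℂ := S *ᵥ v with hu
    have hTv : T *ᵥ v = u + α • v := by
      have : T = S + (T - S) := by abel
      rw [this, Matrix.add_mulVec, hev, hu]
    -- quadratic form values
    have hBnn : 0 ≤ (star v ⬝ᵥ (B *ᵥ v)).re := hB.re_dotProduct_nonneg v
    have hSnn : 0 ≤ (star v ⬝ᵥ u).re := hS.re_dotProduct_nonneg v
    set s : ℝ := (star v ⬝ᵥ u).re with hs
    -- the quadratic form of B equals 2 α s + α ^ 2
    have hBval : (star v ⬝ᵥ (B *ᵥ v)).re = 2 * α * s + α ^ 2 := by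
      have hBsub : B = T * T - S * S := by rw [hT2, hS2]; abel
      have hTT : star v ⬝ᵥ ((T * T) *ᵥ v) = star (T *ᵥ v) ⬝ᵥ (T *ᵥ v) := by
        rw [← Matrix.mulVec_mulVec, herm_swap T hTh]
      have hSS : star v ⬝ᵥ ((S * S) *ᵥ v) = star u ⬝ᵥ u := by
        rw [← Matrix.mulVec_mulVec, herm_swap S hSh, hu]
      have expand : star (T *ᵥ v) ⬝ᵥ (T *ᵥ v)
          = star u ⬝ᵥ u + (α : ℂ) * (star u ⬝ᵥ v) + (α : ℂ) * (star v ⬝ᵥ u)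
            + (α : ℂ) * (α : ℂ) := by
        rw [hTv]
        simp only [star_add, star_smul, add_dotProduct, dotProduct_add,
          smul_dotProduct, dotProduct_smul, star_trivial]
        rw [hvv]
        push_cast
        simp only [real_smul]
        ring
      have husv : star u ⬝ᵥ v = star (star v ⬝ᵥ u) := by
        rw [Matrix.star_dotProduct]
      have : (star v ⬝ᵥ (B *ᵥ v))
          = (α : ℂ) * (star u ⬝ᵥ v) + (α : ℂ) * (star v ⬝ᵥ u) + (α : ℂ) * (α : ℂ) := by
        rw [hBsub, Matrix.sub_mulVec, dotProduct_sub, hTT, hSS, expand]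
        ring
      rw [this, husv]
      simp only [Complex.add_re, Complex.mul_re, Complex.ofReal_re, Complex.ofReal_im,
        Complex.conj_re, Complex.conj_im, RCLike.star_def]
      push_cast
      ring_nf
      rfl
    -- T positive semidefinite gives s + α ≥ 0
    have hTnn : 0 ≤ s + α := by
      have h1 : 0 ≤ (star v ⬝ᵥ (T *ᵥ v)).re := hT.re_dotProduct_nonneg v
      have h2 : (star v ⬝ᵥ (T *ᵥ v)) = (star v ⬝ᵥ u) + (α : ℂ) := by
        rw [hTv, dotProduct_add, dotProduct_smul, real_smul, hvv, mul_one]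
      rw [h2] at h1
      simpa using h1
    rw [hBval] at hBnn
    nlinarith [mul_nonneg hTnn (le_of_lt (neg_pos.mpr hneg))]
  obtain ⟨h1, h2⟩ := retr_psd_nonneg hDpsd
  rw [Matrix.trace_sub, Complex.sub_re] at h1 h2
  refine ⟨by linarith, fun heq => ?_⟩
  have hTS : T - S = 0 := h2 (by linarith)
  have hTSeq : T = S := by rwa [sub_eq_zero] at hTS
  rw [hTSeq, hS2] at hT2
  exact left_eq_add.mp hT2



lemma traceNorm_proj_mul {k l : Type*} [Fintype k] [DecidableEq k] [Fintype l] [DecidableEq l]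
    (P : Matrix k k ℂ) (hP : Pᴴ = P) (hP' : P * P = P) (Y : Matrix k l ℂ) :
    traceNorm (P * Y) ≤ traceNorm Y ∧ (traceNorm (P * Y) = traceNorm Y → P * Y = Y) := by
  have hA : ((P * Y)ᴴ * (P * Y)).PosSemidef := Matrix.posSemidef_conjTranspose_mul_self _
  have hB : (((1 - P) * Y)ᴴ * ((1 - P) * Y)).PosSemidef :=
    Matrix.posSemidef_conjTranspose_mul_self _
  have h1P : (1 - P)ᴴ = 1 - P := by
    rw [Matrix.conjTranspose_sub, Matrix.conjTranspose_one, hP]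
  have h1P' : (1 - P) * (1 - P) = 1 - P := by
    have e : (1 - P) * (1 - P) = 1 - P - P + P * P := by noncomm_ring
    rw [e, hP']; abel
  have e1 : (P * Y)ᴴ * (P * Y) = Yᴴ * (P * Y) := by
    rw [Matrix.conjTranspose_mul, hP]
    simp only [Matrix.mul_assoc]
    rw [← Matrix.mul_assoc P P Y, hP']
  have e2 : ((1 - P) * Y)ᴴ * ((1 - P) * Y) = Yᴴ * ((1 - P) * Y) := by
    rw [Matrix.conjTranspose_mul, h1P]
    simp only [Matrix.mul_assoc]
    rw [← Matrix.mul_assoc (1 - P) (1 - P) Y, h1P']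
  have hsum : Yᴴ * Y = (P * Y)ᴴ * (P * Y) + ((1 - P) * Y)ᴴ * ((1 - P) * Y) := by
    rw [e1, e2, ← Matrix.mul_add]
    congr 1
    have : (1 - P) * Y = Y - P * Y := by rw [Matrix.sub_mul, Matrix.one_mul]
    rw [this]; abel
  have hAB : ((P * Y)ᴴ * (P * Y) + ((1 - P) * Y)ᴴ * ((1 - P) * Y)).PosSemidef := hA.add hB
  have key := sqrt_trace_mono hA hB hAB
  have tnY : traceNorm Y = hAB.sqrt.trace.re := by
    show (Matrix.posSemidef_conjTranspose_mul_self Y).sqrt.trace.re = _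
    rw [sqrt_congr hsum (Matrix.posSemidef_conjTranspose_mul_self Y) hAB]
  have tnPY : traceNorm (P * Y) = hA.sqrt.trace.re := rfl
  constructor
  · rw [tnPY, tnY]; exact key.1
  · intro heq
    rw [tnPY, tnY] at heq
    have hB0 := key.2 heq.symm
    have hz : (1 - P) * Y = 0 := Matrix.conjTranspose_mul_self_eq_zero.mp hB0
    have hz' : Y - P * Y = 0 := by rwa [Matrix.sub_mul, Matrix.one_mul] at hz
    have := sub_eq_zero.mp hz'
    exact this.symm

lemma traceNorm_conjTranspose {k l : Type*} [Fintype k] [DecidableEq k] [Fintype l]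
    [DecidableEq l] (Y : Matrix k l ℂ) : traceNorm Yᴴ = traceNorm Y := by
  classical
  have hM : (Yᴴ * Y).PosSemidef := Matrix.posSemidef_conjTranspose_mul_self Y
  set μ : l → ℝ := hM.1.eigenvalues with hμdef
  have hμ : ∀ i, 0 ≤ μ i := fun i => hM.eigenvalues_nonneg i
  set V : Matrix l l ℂ := (hM.1.eigenvectorUnitary : Matrix l l ℂ) with hVdef
  have hdiag : Vᴴ * (Yᴴ * Y) * V = Matrix.diagonal (RCLike.ofReal ∘ μ) := by
    rw [← Matrix.star_eq_conjTranspose]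
    have := hM.1.conjStarAlgAut_star_eigenvectorUnitary
    rw [Unitary.conjStarAlgAut_apply] at this
    simpa using this
  have hVV : V * Vᴴ = 1 := by
    rw [← Matrix.star_eq_conjTranspose]
    exact Matrix.mem_unitaryGroup_iff.mp hM.1.eigenvectorUnitary.2
  set g : l → ℂ := fun i => if μ i = 0 then 0 else (((Real.sqrt (μ i))⁻¹ : ℝ) : ℂ) with hgdef
  set ind : l → ℂ := fun i => if μ i = 0 then 0 else 1 with hinddef
  set nd : l → ℂ := fun i => if μ i = 0 then 1 else 0 with hnddef
  set sq : l → ℂ := fun i => ((Real.sqrt (μ i) : ℝ) : ℂ) with hsqdef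
  set q : l → ℂ := fun i => ((Real.sqrt (Real.sqrt (μ i)) : ℝ) : ℂ) with hqdef
  set W : Matrix k l ℂ := Y * V * Matrix.diagonal g with hWdef
  set Z : Matrix k l ℂ := Y * V * Matrix.diagonal nd with hZdef
  -- conjugation facts for real diagonals
  have hgs : star g = g := by
    funext i; simp only [hgdef, Pi.star_apply]
    split <;> simp [Complex.star_def, Complex.conj_ofReal]
  have hnds : star nd = nd := by
    funext i; simp only [hnddef, Pi.star_apply]
    split <;> simp [Complex.star_def, Complex.conj_ofReal]
  have hqs : star q = q := by
    funext i; simp only [hqdef, Pi.star_apply]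
    simp [Complex.star_def, Complex.conj_ofReal]
  have hgc : (Matrix.diagonal g)ᴴ = Matrix.diagonal g := by
    rw [Matrix.diagonal_conjTranspose, hgs]
  have hndc : (Matrix.diagonal nd)ᴴ = Matrix.diagonal nd := by
    rw [Matrix.diagonal_conjTranspose, hnds]
  have hqc : (Matrix.diagonal q)ᴴ = Matrix.diagonal q := by
    rw [Matrix.diagonal_conjTranspose, hqs]
  have hWc : Wᴴ = Matrix.diagonal g * (Vᴴ * Yᴴ) := by
    rw [hWdef, Matrix.conjTranspose_mul, Matrix.conjTranspose_mul, hgc]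
  have hZc : Zᴴ = Matrix.diagonal nd * (Vᴴ * Yᴴ) := by
    rw [hZdef, Matrix.conjTranspose_mul, Matrix.conjTranspose_mul, hndc]
  -- pointwise facts
  have hgmg : ∀ i, g i * ((RCLike.ofReal ∘ μ) i) * g i = ind i := by
    intro i
    simp only [hgdef, hinddef, Function.comp_apply]
    by_cases h : μ i = 0
    · simp [h]
    · have hpos : 0 < μ i := lt_of_le_of_ne (hμ i) (Ne.symm h)
      have hsne : Real.sqrt (μ i) ≠ 0 := ne_of_gt (Real.sqrt_pos.mpr hpos)
      rw [if_neg h, if_neg h]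
      rw [show ((RCLike.ofReal (μ i)) : ℂ) = ((μ i : ℝ) : ℂ) from rfl]
      norm_cast
      rw [← Real.mul_self_sqrt (hμ i)]
      field_simp
      rw [Real.sqrt_sq (Real.sqrt_nonneg _)]
  have hnmn : ∀ i, nd i * ((RCLike.ofReal ∘ μ) i) * nd i = 0 := by
    intro i
    by_cases h : μ i = 0 <;>
      simp [hnddef, Function.comp_apply, h]
  -- W^H W = diagonal ind
  have hWW : Wᴴ * W = Matrix.diagonal ind := by
    have e : Wᴴ * W = Matrix.diagonal g * (Vᴴ * (Yᴴ * Y) * V) * Matrix.diagonal g := by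
      rw [hWc, hWdef]; simp only [Matrix.mul_assoc]
    rw [e, hdiag, Matrix.diagonal_mul_diagonal, Matrix.diagonal_mul_diagonal]
    exact congrArg Matrix.diagonal (funext hgmg)
  -- Z = 0
  have hZZ : Zᴴ * Z = 0 := by
    have e : Zᴴ * Z = Matrix.diagonal nd * (Vᴴ * (Yᴴ * Y) * V) * Matrix.diagonal nd := by
      rw [hZc, hZdef]; simp only [Matrix.mul_assoc]
    rw [e, hdiag, Matrix.diagonal_mul_diagonal, Matrix.diagonal_mul_diagonal]
    have : (fun i => nd i * ((RCLike.ofReal ∘ μ) i) * nd i) = fun _ => (0 : ℂ) :=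
      funext fun i => hnmn i
    rw [this, Matrix.diagonal_zero]
  have hZ0 : Z = 0 := Matrix.conjTranspose_mul_self_eq_zero.mp hZZ
  -- the candidate square root T of Y Yᴴ
  set T : Matrix k k ℂ := W * Matrix.diagonal sq * Wᴴ with hTdef
  have hTpsd : T.PosSemidef := by
    have e : T = (W * Matrix.diagonal q) * (W * Matrix.diagonal q)ᴴ := by
      rw [Matrix.conjTranspose_mul, hqc, hTdef]
      have hqq : Matrix.diagonal q * Matrix.diagonal q = Matrix.diagonal sq := by
        rw [Matrix.diagonal_mul_diagonal]
        refine congrArg Matrix.diagonal (funext fun i => ?_)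
        simp only [hqdef, hsqdef]
        norm_cast
        exact Real.mul_self_sqrt (Real.sqrt_nonneg _)
      calc W * Matrix.diagonal sq * Wᴴ
          = W * (Matrix.diagonal q * Matrix.diagonal q) * Wᴴ := by rw [hqq]
        _ = W * Matrix.diagonal q * (Matrix.diagonal q * Wᴴ) := by
              simp only [Matrix.mul_assoc]
    rw [e]
    exact Matrix.posSemidef_self_mul_conjTranspose _
  have hTsq : T * T = Y * Yᴴ := by
    have e : T * T = W * (Matrix.diagonal sq * (Wᴴ * W) * Matrix.diagonal sq) * Wᴴ := by
      rw [hTdef]; simp only [Matrix.mul_assoc]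
    rw [e, hWW, Matrix.diagonal_mul_diagonal, Matrix.diagonal_mul_diagonal]
    have hsis : (fun i => sq i * ind i * sq i) = (RCLike.ofReal ∘ μ) := by
      funext i
      simp only [hsqdef, hinddef, Function.comp_apply]
      by_cases h : μ i = 0
      · simp [h]
      · rw [if_neg h, mul_one, show ((RCLike.ofReal (μ i)) : ℂ) = ((μ i : ℝ) : ℂ) from rfl]
        norm_cast
        exact Real.mul_self_sqrt (hμ i)
    rw [hsis]
    -- W * diagonal μ * Wᴴ = Y * Yᴴ
    have e2 : W * (Matrix.diagonal (RCLike.ofReal ∘ μ) : Matrix l l ℂ) * Wᴴ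
        = (Y * V) * (Matrix.diagonal g * Matrix.diagonal (RCLike.ofReal ∘ μ)
            * Matrix.diagonal g) * (Vᴴ * Yᴴ) := by
      rw [hWc, hWdef]; simp only [Matrix.mul_assoc]
    rw [e2, Matrix.diagonal_mul_diagonal, Matrix.diagonal_mul_diagonal]
    have hdgind : (fun i => g i * ((RCLike.ofReal ∘ μ) i) * g i) = ind := funext hgmg
    rw [hdgind]
    have hindnd : Matrix.diagonal ind = 1 - Matrix.diagonal nd := by
      ext i j
      by_cases hij : i = j
      · subst hij
        by_cases h : μ i = 0 <;>
          simp [hinddef, hnddef, h, Matrix.sub_apply, Matrix.diagonal_apply_eq,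
            Matrix.one_apply_eq]
      · simp [Matrix.diagonal_apply_ne _ hij, Matrix.one_apply_ne hij, Matrix.sub_apply]
    rw [hindnd]
    have expand : (Y * V) * (1 - Matrix.diagonal nd) * (Vᴴ * Yᴴ)
        = Y * (V * Vᴴ) * Yᴴ - Z * (Vᴴ * Yᴴ) := by
      rw [hZdef]
      simp only [Matrix.mul_sub, Matrix.sub_mul, Matrix.mul_one, Matrix.one_mul,
        Matrix.mul_assoc]
    rw [expand, hZ0, hVV, Matrix.zero_mul, sub_zero, Matrix.mul_one]
  -- trace of T
  have htr : T.trace.re = ∑ i, Real.sqrt (μ i) := by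
    rw [hTdef, Matrix.trace_mul_cycle, hWW, Matrix.diagonal_mul_diagonal,
      Matrix.trace_diagonal, Complex.re_sum]
    refine Finset.sum_congr rfl fun i _ => ?_
    by_cases h : μ i = 0 <;>
      simp [hinddef, hsqdef, h]
  -- conclude
  have hcc : (Yᴴ)ᴴ * Yᴴ = Y * Yᴴ := by rw [Matrix.conjTranspose_conjTranspose]
  have hN : ((Yᴴ)ᴴ * Yᴴ).PosSemidef := Matrix.posSemidef_conjTranspose_mul_self Yᴴ
  have hYY : (Y * Yᴴ).PosSemidef := Matrix.posSemidef_self_mul_conjTranspose Y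
  have step1 : traceNorm Yᴴ = hYY.sqrt.trace.re := by
    show hN.sqrt.trace.re = _
    rw [sqrt_congr hcc hN hYY]
  have step2 : T = hYY.sqrt := hTpsd.eq_sqrt_of_sq_eq hYY (by rw [pow_two, hTsq])
  rw [step1, ← step2, htr]
  exact (retr_sqrt hM).symm

end Stmt8Aux

/-- If `‖Π₁ X Π₂‖₁ = ‖X‖₁` for orthogonal projections `Π₁, Π₂`, then `Π₁ X Π₂ = X`. -/
theorem stmt8 (n m : ℕ) (X : Matrix (Fin m) (Fin n) ℂ)
    (P₁ : Matrix (Fin m) (Fin m) ℂ) (P₂ : Matrix (Fin n) (Fin n) ℂ)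
    (hP₁ : P₁ᴴ = P₁) (hP₁' : P₁ * P₁ = P₁)
    (hP₂ : P₂ᴴ = P₂) (hP₂' : P₂ * P₂ = P₂)
    (h : traceNorm (P₁ * X * P₂) = traceNorm X) :
    P₁ * X * P₂ = X := by
  have peel₁ := Stmt8Aux.traceNorm_proj_mul P₁ hP₁ hP₁' (X * P₂)
  have peel₂ := Stmt8Aux.traceNorm_proj_mul P₂ hP₂ hP₂' Xᴴ
  have e2 : (X * P₂)ᴴ = P₂ * Xᴴ := by rw [Matrix.conjTranspose_mul, hP₂]
  have hXP2 : traceNorm (X * P₂) = traceNorm (P₂ * Xᴴ) := by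
    rw [← Stmt8Aux.traceNorm_conjTranspose (X * P₂), e2]
  have le2 : traceNorm (X * P₂) ≤ traceNorm X := by
    rw [hXP2]
    calc traceNorm (P₂ * Xᴴ) ≤ traceNorm Xᴴ := peel₂.1
      _ = traceNorm X := Stmt8Aux.traceNorm_conjTranspose X
  have hassoc : P₁ * X * P₂ = P₁ * (X * P₂) := Matrix.mul_assoc _ _ _
  rw [hassoc] at h ⊢
  have le1 : traceNorm (P₁ * (X * P₂)) ≤ traceNorm (X * P₂) := peel₁.1
  have eq2 : traceNorm (X * P₂) = traceNorm X :=
    le_antisymm le2 (by rw [← h]; exact le1)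
  have eqP2 : P₂ * Xᴴ = Xᴴ := peel₂.2 (by
    rw [← hXP2, eq2, Stmt8Aux.traceNorm_conjTranspose])
  have hZX : X * P₂ = X := by
    have hc := congrArg Matrix.conjTranspose eqP2
    rwa [Matrix.conjTranspose_mul, hP₂, Matrix.conjTranspose_conjTranspose] at hc
  have eqP1 : P₁ * (X * P₂) = X * P₂ := peel₁.2 (by rw [h, eq2])
  rw [eqP1, hZX]
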